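/- arXiv:2306.00798 — 3 statements merged into one kernel-verified Lean document; each statement's English description precedes it below -/
import Mathlib

section
/- Let f be a real-valued function on density matrices (of all finite dimensions) that is additive over tensor products, invariant under conjugation by permutation unitaries on tensor-product spaces, and satisfies the Lipschitz-type continuity bound |f(ρ) - f(σ)| ≤ K·‖ρ-σ‖₁·(log d)^α + η(‖ρ-σ‖₁) for all d and all ρ, σ ∈ D(ℂ^d), where α < 1, K > 0, and η is a function with η(0) = 0 that is continuous at 0. Then f(ρ) = f(σ) for all ρ, σ of equal dimension, i.e., f is constant on each dimension. -/
open Matrix Kronecker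
open scoped ComplexOrder Classical

/-- A density operator: positive semidefinite with unit trace. -/
def IsDensity {ι : Type} [Fintype ι] (A : Matrix ι ι ℂ) : Prop :=
  A.PosSemidef ∧ A.trace = 1

/-- The trace norm (Schatten 1-norm) of a Hermitian matrix: the sum of the
absolute values of its eigenvalues. -/
noncomputable def traceNorm {ι : Type} [Fintype ι] [DecidableEq ι]
    (A : Matrix ι ι ℂ) : ℝ :=
  if h : A.IsHermitian then ∑ i, |h.eigenvalues i| else 0

section Aux

variable {n : Type} [Fintype n] [DecidableEq n]

lemma traceNorm_nonneg' (A : Matrix n n ℂ) : 0 ≤ traceNorm A := by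
  unfold traceNorm
  split
  · exact Finset.sum_nonneg fun i _ => abs_nonneg _
  · exact le_refl 0

lemma posSemidef_smul_real {A : Matrix n n ℂ} (hA : A.PosSemidef) {c : ℝ} (hc : 0 ≤ c) :
    ((c : ℂ) • A).PosSemidef := by
  refine Matrix.PosSemidef.of_dotProduct_mulVec_nonneg ?_ ?_
  · unfold Matrix.IsHermitian
    rw [conjTranspose_smul, hA.1.eq]
    congr 1
    simp [Complex.conj_ofReal]
  · intro x
    rw [smul_mulVec, dotProduct_smul, smul_eq_mul]
    exact mul_nonneg (by exact_mod_cast Complex.zero_le_real.mpr hc) (hA.dotProduct_mulVec_nonneg x)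

lemma diag_nonneg_of_psd {A : Matrix n n ℂ} (hA : A.PosSemidef) (i : n) :
    0 ≤ A i i := by
  exact hA.diag_nonneg

/-- trace norm of a difference of two PSD matrices is at most the sum of real traces. -/
lemma traceNorm_sub_le {A B : Matrix n n ℂ} (hA : A.PosSemidef) (hB : B.PosSemidef) :
    traceNorm (A - B) ≤ A.trace.re + B.trace.re := by
  have h : (A - B).IsHermitian := hA.1.sub hB.1
  rw [traceNorm, dif_pos h]
  set U : Matrix n n ℂ := (h.eigenvectorUnitary : Matrix n n ℂ) with hU
  have hdiag : star U * (A - B) * U = diagonal (RCLike.ofReal ∘ h.eigenvalues) := by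
    rw [← h.conjStarAlgAut_star_eigenvectorUnitary, Unitary.conjStarAlgAut_star_apply]
  have hA' : (star U * A * U).PosSemidef := by
    simpa [Matrix.star_eq_conjTranspose] using hA.conjTranspose_mul_mul_same (B := U)
  have hB' : (star U * B * U).PosSemidef := by
    simpa [Matrix.star_eq_conjTranspose] using hB.conjTranspose_mul_mul_same (B := U)
  have heig : ∀ i, h.eigenvalues i
      = ((star U * A * U) i i).re - ((star U * B * U) i i).re := by
    intro i
    have h1 : (star U * (A - B) * U) i i
        = (diagonal (RCLike.ofReal ∘ h.eigenvalues) : Matrix n n ℂ) i i := by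
      rw [hdiag]
    have h2 : (star U * (A - B) * U) i i
        = (star U * A * U) i i - (star U * B * U) i i := by
      rw [Matrix.mul_sub, Matrix.sub_mul]
      simp [Matrix.sub_apply]
    rw [h2] at h1
    have h3 := congrArg Complex.re h1
    simpa using h3.symm
  calc ∑ i, |h.eigenvalues i|
      ≤ ∑ i, (((star U * A * U) i i).re + ((star U * B * U) i i).re) := by
        refine Finset.sum_le_sum fun i _ => ?_
        rw [heig i]
        have ha := diag_nonneg_of_psd hA' i
        have hb := diag_nonneg_of_psd hB' i
        rw [Complex.le_def] at ha hb
        simp only [Complex.zero_re] at ha hb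
        refine (abs_sub _ _).trans ?_
        rw [abs_of_nonneg ha.1, abs_of_nonneg hb.1]
    _ = (star U * A * U).trace.re + (star U * B * U).trace.re := by
        rw [Matrix.trace, Matrix.trace, Complex.re_sum, Complex.re_sum, ← Finset.sum_add_distrib]
        rfl
    _ = A.trace.re + B.trace.re := by
        have hUU : U * star U = 1 := mem_unitaryGroup_iff.mp h.eigenvectorUnitary.2
        have e1 : (star U * A * U).trace = A.trace := by
          rw [trace_mul_cycle, hUU, Matrix.one_mul]
        have e2 : (star U * B * U).trace = B.trace := by
          rw [trace_mul_cycle, hUU, Matrix.one_mul]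
        rw [e1, e2]

end Aux

section Aux2
variable {ι : Type} [Fintype ι] [DecidableEq ι]

/-- sum over function space of a product equals product of sums -/
lemma sum_prod_swap {m : ℕ} (F : Fin m → ι → ℂ) :
    ∑ g : Fin m → ι, ∏ t, F t (g t) = ∏ t, ∑ x, F t x := by
  rw [Finset.prod_univ_sum (fun _ => Finset.univ) F, Fintype.piFinset_univ]

/-- An entrywise tensor product of density matrices is a density matrix. -/
lemma prod_density {m : ℕ} (A : Fin m → Matrix ι ι ℂ) (h : ∀ t, IsDensity (A t)) :
    IsDensity (Matrix.of fun (i j : Fin m → ι) => ∏ t, A t (i t) (j t)) := by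
  constructor
  · open scoped MatrixOrder in choose B hB using fun t => CStarAlgebra.nonneg_iff_eq_star_mul_self.mp (h t).1.nonneg
    have key : (Matrix.of fun (i j : Fin m → ι) => ∏ t, A t (i t) (j t)) =
        (Matrix.of fun (i j : Fin m → ι) => ∏ t, B t (i t) (j t))ᴴ *
        (Matrix.of fun (i j : Fin m → ι) => ∏ t, B t (i t) (j t)) := by
      ext i j
      simp only [Matrix.mul_apply, Matrix.conjTranspose_apply, Matrix.of_apply, star_prod]
      have : ∀ g : Fin m → ι,
          (∏ t, star (B t (g t) (i t))) * ∏ t, B t (g t) (j t)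
          = ∏ t, (star (B t (g t) (i t)) * B t (g t) (j t)) := by
        intro g; rw [Finset.prod_mul_distrib]
      simp_rw [this]
      rw [sum_prod_swap (fun t y => star (B t y (i t)) * B t y (j t))]
      refine Finset.prod_congr rfl fun t _ => ?_
      rw [hB t]
      simp [Matrix.mul_apply, Matrix.conjTranspose_apply]
    rw [key]
    exact Matrix.posSemidef_conjTranspose_mul_self _
  · have : (Matrix.of fun (i j : Fin m → ι) => ∏ t, A t (i t) (j t)).trace
        = ∏ t, (A t).trace := by
      rw [Matrix.trace]
      simp only [Matrix.diag_apply, Matrix.of_apply]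
      rw [sum_prod_swap (fun t x => A t x x)]
      rfl
    rw [this]
    refine Finset.prod_eq_one fun t _ => (h t).2

lemma density_avg {N : ℕ} (D : ℕ → Matrix ι ι ℂ)
    (hD : ∀ k ∈ Finset.range (N + 1), IsDensity (D k)) :
    IsDensity ((Complex.ofReal ((N + 1 : ℝ)⁻¹)) • ∑ k ∈ Finset.range (N + 1), D k) := by
  constructor
  · have hc : (0:ℝ) ≤ ((N + 1 : ℝ))⁻¹ := by positivity
    have hsum : (∑ k ∈ Finset.range (N + 1), D k).PosSemidef :=
      Finset.sum_induction _ _ (fun a b ha hb => ha.add hb) Matrix.PosSemidef.zero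
        (fun k hk => (hD k hk).1)
    exact posSemidef_smul_real hsum hc
  · rw [Matrix.trace_smul, Matrix.trace_sum]
    rw [Finset.sum_congr rfl (fun k hk => (hD k hk).2)]
    simp only [Finset.sum_const, Finset.card_range, nsmul_eq_mul, mul_one, smul_eq_mul]
    push_cast
    exact inv_mul_cancel₀ (by exact_mod_cast Nat.succ_ne_zero N)

end Aux2

section Equivs

/-- prepend an index -/
def consE (m : ℕ) (ι : Type) : ι × (Fin m → ι) ≃ (Fin (m + 1) → ι) where
  toFun p := Fin.cons p.1 p.2
  invFun q := (q 0, Fin.tail q)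
  left_inv p := by simp
  right_inv q := by simp

/-- append an index -/
def snocE (m : ℕ) (ι : Type) : ι × (Fin m → ι) ≃ (Fin (m + 1) → ι) where
  toFun p := Fin.snoc p.2 p.1
  invFun q := (q (Fin.last m), Fin.init q)
  left_inv p := by simp
  right_inv q := by simp

end Equivs

set_option maxHeartbeats 2000000 in
theorem catalyst_step
    (f : ∀ (ι : Type) [Fintype ι] [DecidableEq ι], Matrix ι ι ℂ → ℝ)
    (hadd : ∀ (ι κ : Type) [Fintype ι] [DecidableEq ι] [Fintype κ] [DecidableEq κ]
      (ρ : Matrix ι ι ℂ) (ω : Matrix κ κ ℂ), IsDensity ρ → IsDensity ω →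
      f (ι × κ) (ρ ⊗ₖ ω) = f ι ρ + f κ ω)
    (hperm : ∀ (ι κ : Type) [Fintype ι] [DecidableEq ι] [Fintype κ] [DecidableEq κ]
      (e : ι ≃ κ) (A : Matrix ι ι ℂ), IsDensity A →
      f κ (Matrix.reindex e e A) = f ι A)
    (K α : ℝ) (hK : 0 < K) (hα : α < 1)
    (η : ℝ → ℝ) (hη0 : η 0 = 0) (hηcont : ContinuousAt η 0)
    (hcont : ∀ (ι : Type) [Fintype ι] [DecidableEq ι] (ρ σ : Matrix ι ι ℂ),
      IsDensity ρ → IsDensity σ →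
      |f ι ρ - f ι σ| ≤
        K * traceNorm (ρ - σ) * Real.log (Fintype.card ι) ^ α
          + η (traceNorm (ρ - σ)))
    {ι : Type} [Fintype ι] [DecidableEq ι] (ρ σ : Matrix ι ι ℂ)
    (hρ : IsDensity ρ) (hσ : IsDensity σ) (m : ℕ) :
    ∃ t : ℝ, 0 ≤ t ∧ t ≤ 2 / ((m : ℝ) + 1) ∧
      |f ι ρ - f ι σ| ≤ K * t * (((m : ℝ) + 1) * Real.log (Fintype.card ι)) ^ α + η t := by
  classical
  -- the building blocks: ρ on the first k coordinates, σ on the rest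
  set M : ℕ → Matrix (Fin (m + 1) → ι) (Fin (m + 1) → ι) ℂ := fun k =>
    Matrix.of fun i j => ∏ t : Fin (m + 1), (if (t : ℕ) < k then ρ else σ) (i t) (j t) with hM
  set M' : ℕ → Matrix (Fin m → ι) (Fin m → ι) ℂ := fun k =>
    Matrix.of fun i j => ∏ t : Fin m, (if (t : ℕ) < k then ρ else σ) (i t) (j t) with hM'
  have hMd : ∀ k, IsDensity (M k) := by
    intro k
    exact prod_density _ (fun t => by split <;> assumption)
  have hM'd : ∀ k, IsDensity (M' k) := by
    intro k
    exact prod_density _ (fun t => by split <;> assumption)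
  set c : ℂ := Complex.ofReal ((m + 1 : ℝ)⁻¹) with hc
  set ω : Matrix (Fin m → ι) (Fin m → ι) ℂ := c • ∑ k ∈ Finset.range (m + 1), M' k with hω
  have hωd : IsDensity ω := density_avg M' (fun k _ => hM'd k)
  set e1 := consE m ι
  set e2 := snocE m ι
  set X := Matrix.reindex e1 e1 (ρ ⊗ₖ ω) with hX
  set Y := Matrix.reindex e2 e2 (σ ⊗ₖ ω) with hY
  -- entrywise values
  have hXent : ∀ k (p q : Fin (m + 1) → ι),
      ρ (p 0) (q 0) * M' k (Fin.tail p) (Fin.tail q) = M (k + 1) p q := by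
    intro k p q
    simp only [hM, hM', Matrix.of_apply]
    rw [Fin.prod_univ_succ]
    refine congrArg₂ (· * ·) ?_ ?_
    · have h0 : ((0 : Fin (m + 1)) : ℕ) < k + 1 := Nat.succ_pos k
      simp only [if_pos h0]
    · refine Finset.prod_congr rfl fun t _ => ?_
      have hiff : ((t.succ : Fin (m + 1)) : ℕ) < k + 1 ↔ (t : ℕ) < k := by
        simp [Fin.val_succ]
      simp only [Fin.tail]
      by_cases h : (t : ℕ) < k
      · rw [if_pos h, if_pos (hiff.mpr h)]
      · rw [if_neg h, if_neg (fun hh => h (hiff.mp hh))]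
  have hYent : ∀ k, k ≤ m → ∀ (p q : Fin (m + 1) → ι),
      σ (p (Fin.last m)) (q (Fin.last m)) * M' k (Fin.init p) (Fin.init q) = M k p q := by
    intro k hkm p q
    simp only [hM, hM', Matrix.of_apply]
    rw [Fin.prod_univ_castSucc, mul_comm]
    have hprodeq : (∏ t : Fin m, (if (t : ℕ) < k then ρ else σ) (Fin.init p t) (Fin.init q t))
        = ∏ i : Fin m,
            (if ((i.castSucc : Fin (m + 1)) : ℕ) < k then ρ else σ) (p i.castSucc) (q i.castSucc) := by
      refine Finset.prod_congr rfl fun t _ => ?_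
      simp only [Fin.init, Fin.coe_castSucc]
    have hlast : (if ((Fin.last m : Fin (m + 1)) : ℕ) < k then ρ else σ) = σ :=
      if_neg (by simp only [Fin.val_last]; omega)
    rw [hprodeq, hlast]
  have hXval : X = c • ∑ k ∈ Finset.range (m + 1), M (k + 1) := by
    ext p q
    simp only [hX, Matrix.reindex_apply, Matrix.submatrix_apply, Matrix.kroneckerMap_apply,
      hω, Matrix.smul_apply, Matrix.sum_apply, smul_eq_mul, Finset.mul_sum]
    refine Finset.sum_congr rfl fun k _ => ?_
    show ρ (p 0) (q 0) * (c * M' k (Fin.tail p) (Fin.tail q)) = c * M (k + 1) p q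
    rw [← hXent k p q]
    ring
  have hYval : Y = c • ∑ k ∈ Finset.range (m + 1), M k := by
    ext p q
    simp only [hY, Matrix.reindex_apply, Matrix.submatrix_apply, Matrix.kroneckerMap_apply,
      hω, Matrix.smul_apply, Matrix.sum_apply, smul_eq_mul, Finset.mul_sum]
    refine Finset.sum_congr rfl fun k hk => ?_
    have hkm : k ≤ m := Nat.lt_succ_iff.mp (Finset.mem_range.mp hk)
    show σ (p (Fin.last m)) (q (Fin.last m)) * (c * M' k (Fin.init p) (Fin.init q)) = c * M k p q
    rw [← hYent k hkm p q]
    ring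
  -- densities of X and Y
  have hXd : IsDensity X := by
    rw [hXval]
    exact density_avg (fun k => M (k + 1)) (fun k _ => hMd (k + 1))
  have hYd : IsDensity Y := by
    rw [hYval]
    exact density_avg M (fun k _ => hMd k)
  have hρω : IsDensity (ρ ⊗ₖ ω) := by
    constructor
    · have hsub : ρ ⊗ₖ ω = X.submatrix e1 e1 := by
        rw [hX, Matrix.reindex_apply, Matrix.submatrix_submatrix]
        simp
      rw [hsub]
      exact hXd.1.submatrix e1
    · rw [Matrix.trace_kronecker, hρ.2, hωd.2, one_mul]
  have hσω : IsDensity (σ ⊗ₖ ω) := by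
    constructor
    · have hsub : σ ⊗ₖ ω = Y.submatrix e2 e2 := by
        rw [hY, Matrix.reindex_apply, Matrix.submatrix_submatrix]
        simp
      rw [hsub]
      exact hYd.1.submatrix e2
    · rw [Matrix.trace_kronecker, hσ.2, hωd.2, one_mul]
  -- the f-chain
  have h1 : f _ X = f ι ρ + f _ ω := by
    rw [hX, hperm _ _ e1 _ hρω, hadd _ _ ρ ω hρ hωd]
  have h2 : f _ Y = f ι σ + f _ ω := by
    rw [hY, hperm _ _ e2 _ hσω, hadd _ _ σ ω hσ hωd]
  have hdiff : f ι ρ - f ι σ = f _ X - f _ Y := by rw [h1, h2]; ring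
  -- the telescoping difference
  have hXY : X - Y = c • M (m + 1) - c • M 0 := by
    rw [hXval, hYval, ← smul_sub, ← Finset.sum_sub_distrib,
      Finset.sum_range_sub (fun k => M k), smul_sub]
  set t := traceNorm (X - Y) with ht
  have ht0 : 0 ≤ t := traceNorm_nonneg' _
  have htle : t ≤ 2 / ((m : ℝ) + 1) := by
    rw [ht, hXY]
    have hc0 : (0 : ℝ) ≤ ((m : ℝ) + 1)⁻¹ := by positivity
    have hA : (c • M (m + 1)).PosSemidef := by
      rw [hc]
      exact posSemidef_smul_real (hMd (m + 1)).1 (by positivity)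
    have hB : (c • M 0).PosSemidef := by
      rw [hc]
      exact posSemidef_smul_real (hMd 0).1 (by positivity)
    have hbound := traceNorm_sub_le hA hB
    have htr : ∀ k, (c • M k).trace.re = ((m : ℝ) + 1)⁻¹ := by
      intro k
      rw [Matrix.trace_smul, (hMd k).2, smul_eq_mul, mul_one, hc]
      exact Complex.ofReal_re _
    rw [htr (m + 1), htr 0] at hbound
    refine hbound.trans (le_of_eq ?_)
    field_simp
    norm_num
  -- the continuity estimate
  have hest := hcont _ X Y hXd hYd
  have hlog : Real.log (Fintype.card (Fin (m + 1) → ι))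
      = ((m : ℝ) + 1) * Real.log (Fintype.card ι) := by
    have hcard : Fintype.card (Fin (m + 1) → ι) = Fintype.card ι ^ (m + 1) := by
      simp [Fintype.card_fun]
    rw [hcard]
    push_cast
    rw [Real.log_pow]
    push_cast
    ring
  refine ⟨t, ht0, htle, ?_⟩
  rw [hdiff, ← hlog]
  exact hest

set_option maxHeartbeats 2000000 in
/-- A function on density matrices of all finite dimensions that is additive
over tensor products, invariant under conjugation by permutation unitaries on
tensor-product spaces (i.e. under relabelings/permutations of the product
basis, expressed as reindexing along bijections), and "more than
asymptotically continuous" (Lipschitz-type bound with exponent `α < 1` in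
`log d`) must be constant on the density matrices of each dimension. -/
theorem no_more_than_asymptotic_continuity
    (f : ∀ (ι : Type) [Fintype ι] [DecidableEq ι], Matrix ι ι ℂ → ℝ)
    (hadd : ∀ (ι κ : Type) [Fintype ι] [DecidableEq ι] [Fintype κ] [DecidableEq κ]
      (ρ : Matrix ι ι ℂ) (ω : Matrix κ κ ℂ), IsDensity ρ → IsDensity ω →
      f (ι × κ) (ρ ⊗ₖ ω) = f ι ρ + f κ ω)
    (hperm : ∀ (ι κ : Type) [Fintype ι] [DecidableEq ι] [Fintype κ] [DecidableEq κ]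
      (e : ι ≃ κ) (A : Matrix ι ι ℂ), IsDensity A →
      f κ (Matrix.reindex e e A) = f ι A)
    (K α : ℝ) (hK : 0 < K) (hα : α < 1)
    (η : ℝ → ℝ) (hη0 : η 0 = 0) (hηcont : ContinuousAt η 0)
    (hcont : ∀ (ι : Type) [Fintype ι] [DecidableEq ι] (ρ σ : Matrix ι ι ℂ),
      IsDensity ρ → IsDensity σ →
      |f ι ρ - f ι σ| ≤
        K * traceNorm (ρ - σ) * Real.log (Fintype.card ι) ^ α
          + η (traceNorm (ρ - σ)))
    {ι : Type} [Fintype ι] [DecidableEq ι] (ρ σ : Matrix ι ι ℂ)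
    (hρ : IsDensity ρ) (hσ : IsDensity σ) :
    f ι ρ = f ι σ := by
  have key := fun m : ℕ =>
    catalyst_step f hadd hperm K α hK hα η hη0 hηcont hcont ρ σ hρ hσ m
  choose t ht0 htle hbound using key
  set L := Real.log (Fintype.card ι) with hL
  have hL0 : 0 ≤ L := by
    rw [hL]
    rcases Nat.eq_zero_or_pos (Fintype.card ι) with h | h
    · simp [h]
    · exact Real.log_nonneg (by exact_mod_cast h)
  have htt : Filter.Tendsto t Filter.atTop (nhds 0) := by
    refine squeeze_zero ht0 htle ?_
    have h2 := Filter.Tendsto.div_atTop (tendsto_const_nhds (x := (2 : ℝ)))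
      (Filter.tendsto_atTop_add_const_right _ 1
        (tendsto_natCast_atTop_atTop (R := ℝ)))
    simpa using h2
  have hηt : Filter.Tendsto (fun m => η (t m)) Filter.atTop (nhds 0) := by
    rw [← hη0]
    exact hηcont.tendsto.comp htt
  have hmain : Filter.Tendsto (fun m : ℕ => K * t m * (((m : ℝ) + 1) * L) ^ α)
      Filter.atTop (nhds 0) := by
    refine squeeze_zero (f := fun m : ℕ => K * t m * (((m : ℝ) + 1) * L) ^ α)
      (g := fun m : ℕ => (2 * K * L ^ α) * ((m : ℝ) + 1) ^ (α - 1))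
      (fun m => ?_) (fun m => ?_) ?_
    · exact mul_nonneg (mul_nonneg hK.le (ht0 m)) (Real.rpow_nonneg (by positivity) _)
    · have hx : (0 : ℝ) < (m : ℝ) + 1 := by positivity
      have h1 : K * t m * (((m : ℝ) + 1) * L) ^ α
          ≤ K * (2 / ((m : ℝ) + 1)) * (((m : ℝ) + 1) * L) ^ α := by
        apply mul_le_mul_of_nonneg_right _ (Real.rpow_nonneg (by positivity) _)
        exact mul_le_mul_of_nonneg_left (htle m) hK.le
      refine h1.trans (le_of_eq ?_)
      show K * (2 / ((m : ℝ) + 1)) * (((m : ℝ) + 1) * L) ^ α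
          = 2 * K * L ^ α * ((m : ℝ) + 1) ^ (α - 1)
      rw [Real.mul_rpow hx.le hL0, Real.rpow_sub hx, Real.rpow_one]
      ring
    · have h2 : Filter.Tendsto (fun x : ℝ => x ^ (α - 1)) Filter.atTop (nhds 0) := by
        have h4 := tendsto_rpow_neg_atTop (y := 1 - α) (by linarith)
        simpa [neg_sub] using h4
      have h3 : Filter.Tendsto (fun m : ℕ => ((m : ℝ) + 1) ^ (α - 1))
          Filter.atTop (nhds 0) :=
        h2.comp (Filter.tendsto_atTop_add_const_right _ 1
          (tendsto_natCast_atTop_atTop (R := ℝ)))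
      have h5 := h3.const_mul (2 * K * L ^ α)
      simpa using h5
  have hsum : Filter.Tendsto
      (fun m : ℕ => K * t m * (((m : ℝ) + 1) * L) ^ α + η (t m))
      Filter.atTop (nhds 0) := by
    simpa using hmain.add hηt
  have habs : |f ι ρ - f ι σ| ≤ 0 := by
    by_contra h
    push_neg at h
    obtain ⟨m, hm⟩ := (hsum.eventually_lt_const h).exists
    exact absurd (hbound m) (not_le.mpr hm)
  have hz := abs_nonpos_iff.mp habs
  linarith [sub_eq_zero.mp hz]
end

section
/- Let U be a unitary on H_S ⊗ H_C, ρ_S a density operator on H_S and ω_C a density operator on H_C. Set τ = U(ρ_S ⊗ ω_C)U† and suppose tr_S[τ] = ω_C. Then H(tr_C[τ]) - H(ρ_S) = I(S:C)_τ, where I(S:C)_τ = H(τ_S) + H(τ_C) - H(τ) is the quantum mutual information. In particular H(tr_C[τ]) ≥ H(ρ_S). -/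
open Matrix Kronecker
open scoped ComplexOrder Classical

/-- The von Neumann entropy `H(ρ) = -tr[ρ log ρ]` of a Hermitian matrix,
expressed through its eigenvalues. -/
noncomputable def vnEntropy {ι : Type} [Fintype ι] [DecidableEq ι]
    (A : Matrix ι ι ℂ) : ℝ :=
  if h : A.IsHermitian then ∑ i, Real.negMulLog (h.eigenvalues i) else 0

/-- Partial trace over the second tensor factor (trace out `C`). -/
noncomputable def trRight {ι κ : Type} [Fintype κ]
    (X : Matrix (ι × κ) (ι × κ) ℂ) : Matrix ι ι ℂ :=
  fun i i' => ∑ j, X (i, j) (i', j)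

/-- Partial trace over the first tensor factor (trace out `S`). -/
noncomputable def trLeft {ι κ : Type} [Fintype ι]
    (X : Matrix (ι × κ) (ι × κ) ℂ) : Matrix κ κ ℂ :=
  fun j j' => ∑ i, X (i, j) (i, j')


section Aux
open Polynomial
set_option linter.unusedSectionVars false

variable {ι κ : Type} [Fintype ι] [DecidableEq ι] [Fintype κ] [DecidableEq κ]


lemma my_charpoly_conj (U A V : Matrix ι ι ℂ) (hUV : U * V = 1) :
    (U * A * V).charpoly = A.charpoly := by
  have hmm : (C : ℂ →+* ℂ[X]).mapMatrix U * (C : ℂ →+* ℂ[X]).mapMatrix V = 1 := by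
    simpa using congrArg (C : ℂ →+* ℂ[X]).mapMatrix hUV
  have h1 : charmatrix (U * A * V)
      = (C : ℂ →+* ℂ[X]).mapMatrix U * charmatrix A * (C : ℂ →+* ℂ[X]).mapMatrix V := by
    rw [charmatrix, charmatrix, Matrix.mul_sub, Matrix.sub_mul]
    have h2 : (C : ℂ →+* ℂ[X]).mapMatrix (U * A * V)
        = (C : ℂ →+* ℂ[X]).mapMatrix U * (C : ℂ →+* ℂ[X]).mapMatrix A * (C : ℂ →+* ℂ[X]).mapMatrix V := by
      simp
    rw [h2]
    congr 1
    have hc : Commute (Matrix.scalar ι (X : ℂ[X])) ((C : ℂ →+* ℂ[X]).mapMatrix V) :=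
      Matrix.scalar_commute _ (fun r => Commute.all _ _) _
    rw [mul_assoc, hc.eq, ← mul_assoc, hmm, one_mul]
  rw [Matrix.charpoly, Matrix.charpoly, h1, det_mul, det_mul, mul_right_comm, ← det_mul, hmm, det_one, one_mul]

lemma charpoly_diagonal (d : ι → ℂ) :
    (Matrix.diagonal d).charpoly = ∏ i, (X - C (d i)) := by
  have h : charmatrix (Matrix.diagonal d) = Matrix.diagonal (fun i => (X : ℂ[X]) - C (d i)) := by
    refine Matrix.ext fun i j => ?_
    by_cases h : i = j
    · subst h; rw [charmatrix_apply_eq, Matrix.diagonal_apply_eq, Matrix.diagonal_apply_eq]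
    · rw [charmatrix_apply_ne _ _ _ h, Matrix.diagonal_apply_ne _ h, Matrix.diagonal_apply_ne _ h, map_zero, neg_zero]
  rw [Matrix.charpoly, h, det_diagonal]

lemma roots_charpoly_diagonal (d : ι → ℂ) :
    (Matrix.diagonal d).charpoly.roots = Finset.univ.val.map d := by
  rw [_root_.charpoly_diagonal]
  have : ∏ i, ((X : ℂ[X]) - C (d i)) = ((Finset.univ.val.map d).map (fun a => (X:ℂ[X]) - C a)).prod := by
    rw [Multiset.map_map]; rfl
  rw [this, roots_multiset_prod_X_sub_C]

lemma roots_charpoly_hermitian {A : Matrix ι ι ℂ} (hA : A.IsHermitian) :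
    A.charpoly.roots = Finset.univ.val.map (fun i => (hA.eigenvalues i : ℂ)) := by
  have hU := (Matrix.mem_unitaryGroup_iff).mp (hA.eigenvectorUnitary).2
  have h : A.charpoly = (Matrix.diagonal ((fun r : ℝ => (r:ℂ)) ∘ hA.eigenvalues)).charpoly := by
    conv_lhs => rw [hA.spectral_theorem]
    exact my_charpoly_conj _ _ _ (by simpa [Matrix.star_eq_conjTranspose] using hU)
  rw [h, roots_charpoly_diagonal]
  rfl

lemma sum_eig_eq_of_roots {A : Matrix ι ι ℂ} (hA : A.IsHermitian) {g : κ → ℝ}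
    (h : A.charpoly.roots = Finset.univ.val.map (fun k => (g k : ℂ)))
    (f : ℝ → ℝ) : ∑ i, f (hA.eigenvalues i) = ∑ k, f (g k) := by
  have h2 : (Finset.univ.val.map (fun i => (hA.eigenvalues i : ℂ)))
      = Finset.univ.val.map (fun k => (g k : ℂ)) := by
    rw [← roots_charpoly_hermitian hA, h]
  have h3 := congrArg (Multiset.map (fun z : ℂ => f z.re)) h2
  rw [Multiset.map_map, Multiset.map_map] at h3
  have h4 := congrArg Multiset.sum h3
  rw [Finset.sum_eq_multiset_sum, Finset.sum_eq_multiset_sum]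
  exact h4

lemma sum_eigenvalues_eq_trace {A : Matrix ι ι ℂ} (hA : A.IsHermitian) :
    (∑ i, (hA.eigenvalues i : ℂ)) = A.trace := by
  have hU := (Matrix.mem_unitaryGroup_iff').mp (hA.eigenvectorUnitary).2
  conv_rhs => rw [hA.spectral_theorem, Unitary.conjStarAlgAut_apply]
  rw [Matrix.trace_mul_cycle, hU, one_mul,
    Matrix.trace_diagonal]
  rfl

lemma vnEntropy_eq {A : Matrix ι ι ℂ} (hA : A.IsHermitian) :
    vnEntropy A = ∑ i, Real.negMulLog (hA.eigenvalues i) := by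
  rw [vnEntropy, dif_pos hA]

lemma kron_conjTranspose (A : Matrix ι ι ℂ) (B : Matrix κ κ ℂ) :
    (A ⊗ₖ B)ᴴ = Aᴴ ⊗ₖ Bᴴ := by
  refine Matrix.ext fun p q => ?_
  obtain ⟨i, j⟩ := p; obtain ⟨i', j'⟩ := q
  simp [Matrix.conjTranspose_apply, Matrix.kroneckerMap_apply]

lemma kron_eq {A : Matrix ι ι ℂ} {B : Matrix κ κ ℂ} (hA : A.IsHermitian) (hB : B.IsHermitian) :
    A ⊗ₖ B = ((hA.eigenvectorUnitary : Matrix ι ι ℂ) ⊗ₖ (hB.eigenvectorUnitary : Matrix κ κ ℂ))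
      * Matrix.diagonal (fun p : ι × κ => ((hA.eigenvalues p.1 : ℂ) * (hB.eigenvalues p.2 : ℂ)))
      * ((hA.eigenvectorUnitary : Matrix ι ι ℂ) ⊗ₖ (hB.eigenvectorUnitary : Matrix κ κ ℂ))ᴴ := by
  conv_lhs => rw [hA.spectral_theorem, hB.spectral_theorem, Unitary.conjStarAlgAut_apply,
    Unitary.conjStarAlgAut_apply]
  rw [kron_conjTranspose, Matrix.mul_kronecker_mul, Matrix.mul_kronecker_mul,
      Matrix.diagonal_kronecker_diagonal]
  rfl

lemma kron_unitary_mul {A : Matrix ι ι ℂ} {B : Matrix κ κ ℂ} (hA : A.IsHermitian)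
    (hB : B.IsHermitian) :
    ((hA.eigenvectorUnitary : Matrix ι ι ℂ) ⊗ₖ (hB.eigenvectorUnitary : Matrix κ κ ℂ))
      * ((hA.eigenvectorUnitary : Matrix ι ι ℂ) ⊗ₖ (hB.eigenvectorUnitary : Matrix κ κ ℂ))ᴴ = 1 := by
  rw [kron_conjTranspose, ← Matrix.mul_kronecker_mul]
  have h1 : (hA.eigenvectorUnitary : Matrix ι ι ℂ) * (hA.eigenvectorUnitary : Matrix ι ι ℂ)ᴴ = 1 := by
    simpa [Matrix.star_eq_conjTranspose] using (Matrix.mem_unitaryGroup_iff).mp hA.eigenvectorUnitary.2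
  have h2 : (hB.eigenvectorUnitary : Matrix κ κ ℂ) * (hB.eigenvectorUnitary : Matrix κ κ ℂ)ᴴ = 1 := by
    simpa [Matrix.star_eq_conjTranspose] using (Matrix.mem_unitaryGroup_iff).mp hB.eigenvectorUnitary.2
  rw [h1, h2, Matrix.one_kronecker_one]

lemma roots_charpoly_kron {A : Matrix ι ι ℂ} {B : Matrix κ κ ℂ} (hA : A.IsHermitian)
    (hB : B.IsHermitian) :
    (A ⊗ₖ B).charpoly.roots
      = Finset.univ.val.map (fun p : ι × κ => ((hA.eigenvalues p.1 * hB.eigenvalues p.2 : ℝ) : ℂ)) := by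
  rw [kron_eq hA hB, my_charpoly_conj _ _ _ (kron_unitary_mul hA hB), roots_charpoly_diagonal]
  refine Multiset.map_congr rfl fun p _ => by push_cast; ring

lemma kron_posSemidef {A : Matrix ι ι ℂ} {B : Matrix κ κ ℂ} (hA : A.PosSemidef)
    (hB : B.PosSemidef) : (A ⊗ₖ B).PosSemidef := by
  rw [kron_eq hA.1 hB.1]
  refine Matrix.PosSemidef.mul_mul_conjTranspose_same (Matrix.PosSemidef.diagonal fun p => ?_) _
  have h0 : ((hA.1.eigenvalues p.1 : ℂ)) * (hB.1.eigenvalues p.2 : ℂ)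
      = ((hA.1.eigenvalues p.1 * hB.1.eigenvalues p.2 : ℝ) : ℂ) := by push_cast; ring
  rw [h0]
  exact Complex.zero_le_real.mpr <| mul_nonneg (hA.eigenvalues_nonneg p.1) (hB.eigenvalues_nonneg p.2)

lemma diag_re_eq {A : Matrix ι ι ℂ} (hA : A.IsHermitian) (j : ι) :
    (A j j).re = ∑ i, Complex.normSq ((hA.eigenvectorUnitary : Matrix ι ι ℂ) j i)
      * hA.eigenvalues i := by
  conv_lhs => rw [hA.spectral_theorem, Unitary.conjStarAlgAut_apply]
  rw [Matrix.mul_apply]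
  simp only [Matrix.mul_diagonal, Matrix.star_apply, Function.comp_apply]
  have term : ∀ k, (hA.eigenvectorUnitary : Matrix ι ι ℂ) j k * (RCLike.ofReal (hA.eigenvalues k))
      * star ((hA.eigenvectorUnitary : Matrix ι ι ℂ) j k)
      = ((Complex.normSq ((hA.eigenvectorUnitary : Matrix ι ι ℂ) j k) * hA.eigenvalues k : ℝ) : ℂ) := by
    intro k
    have h1 : (hA.eigenvectorUnitary : Matrix ι ι ℂ) j k * (RCLike.ofReal (hA.eigenvalues k))
        * star ((hA.eigenvectorUnitary : Matrix ι ι ℂ) j k)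
        = ((hA.eigenvectorUnitary : Matrix ι ι ℂ) j k * star ((hA.eigenvectorUnitary : Matrix ι ι ℂ) j k))
          * (RCLike.ofReal (hA.eigenvalues k)) := by ring
    rw [h1]
    simp only [Complex.star_def, Complex.mul_conj]
    push_cast
    rfl
  simp_rw [term]
  rw [← Complex.ofReal_sum]
  exact Complex.ofReal_re _

lemma row_normSq_sum {W : Matrix ι ι ℂ} (hW : W * Wᴴ = 1) (j : ι) :
    ∑ i, Complex.normSq (W j i) = 1 := by
  have h := congrFun (congrFun hW j) j
  rw [Matrix.mul_apply] at h
  have h2 : ∀ i, W j i * Wᴴ i j = ((Complex.normSq (W j i) : ℝ) : ℂ) := by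
    intro i
    simp only [Matrix.conjTranspose_apply, Complex.star_def, Complex.mul_conj]
  simp_rw [h2] at h
  rw [← Complex.ofReal_sum, Matrix.one_apply_eq] at h
  exact_mod_cast h

lemma vnEntropy_le_sum_diag {A : Matrix ι ι ℂ} (hA : A.PosSemidef) :
    vnEntropy A ≤ ∑ j, Real.negMulLog (A j j).re := by
  classical
  set W : Matrix ι ι ℂ := (hA.1.eigenvectorUnitary : Matrix ι ι ℂ) with hWdef
  have hWW : W * Wᴴ = 1 := by
    simpa [Matrix.star_eq_conjTranspose] using (Matrix.mem_unitaryGroup_iff).mp hA.1.eigenvectorUnitary.2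
  have hWW' : Wᴴ * W = 1 := mul_eq_one_comm.mp hWW
  have hcol : ∀ i, ∑ j, Complex.normSq (W j i) = 1 := by
    intro i
    have := row_normSq_sum (W := Wᴴ) (by rwa [Matrix.conjTranspose_conjTranspose]) i
    simpa [Matrix.conjTranspose_apply, Complex.normSq_conj] using this
  have key : ∀ j, ∑ i, Complex.normSq (W j i) * Real.negMulLog (hA.1.eigenvalues i)
      ≤ Real.negMulLog (A j j).re := by
    intro j
    have := Real.concaveOn_negMulLog.le_map_sum (t := Finset.univ)
      (w := fun i => Complex.normSq (W j i)) (p := fun i => hA.1.eigenvalues i)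
      (fun i _ => Complex.normSq_nonneg _) (row_normSq_sum hWW j)
      (fun i _ => hA.eigenvalues_nonneg i)
    rw [diag_re_eq hA.1 j, ← hWdef]
    simpa [smul_eq_mul] using this
  calc vnEntropy A = ∑ i, Real.negMulLog (hA.1.eigenvalues i) := vnEntropy_eq hA.1
    _ = ∑ i, (∑ j, Complex.normSq (W j i)) * Real.negMulLog (hA.1.eigenvalues i) := by
        simp_rw [hcol, one_mul]
    _ = ∑ j, ∑ i, Complex.normSq (W j i) * Real.negMulLog (hA.1.eigenvalues i) := by
        rw [Finset.sum_comm]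
        simp_rw [Finset.sum_mul]
    _ ≤ ∑ j, Real.negMulLog (A j j).re := Finset.sum_le_sum fun j _ => key j

lemma classical_subadd (r : ι → κ → ℝ) (p : ι → ℝ) (q : κ → ℝ)
    (hr : ∀ a b, 0 ≤ r a b)
    (hp : ∀ a, p a = ∑ b, r a b) (hq : ∀ b, q b = ∑ a, r a b)
    (hpsum : ∑ a, p a = 1) :
    ∑ a, ∑ b, Real.negMulLog (r a b)
      ≤ (∑ a, Real.negMulLog (p a)) + ∑ b, Real.negMulLog (q b) := by
  classical
  have hsum : ∑ a, ∑ b, r a b = 1 := by simp_rw [← hp]; exact hpsum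
  have hqsum : ∑ b, q b = 1 := by
    simp_rw [hq]; rw [Finset.sum_comm]; simp_rw [← hp]; exact hpsum
  have hpn : ∀ a, 0 ≤ p a := fun a => (hp a) ▸ Finset.sum_nonneg fun b _ => hr a b
  have hqn : ∀ b, 0 ≤ q b := fun b => (hq b) ▸ Finset.sum_nonneg fun a _ => hr a b
  have hrp : ∀ a b, r a b ≤ p a := fun a b =>
    (hp a) ▸ Finset.single_le_sum (fun b _ => hr a b) (Finset.mem_univ b)
  have hrq : ∀ a b, r a b ≤ q b := fun a b =>
    (hq b) ▸ Finset.single_le_sum (fun a _ => hr a b) (Finset.mem_univ a)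
  -- termwise Gibbs
  have key : ∀ a b, r a b * Real.log (p a * q b) - r a b * Real.log (r a b)
      ≤ p a * q b - r a b := by
    intro a b
    by_cases hz : r a b = 0
    · simp [hz, mul_nonneg (hpn a) (hqn b)]
    · have hrpos : 0 < r a b := lt_of_le_of_ne (hr a b) (Ne.symm hz)
      have hppos : 0 < p a := lt_of_lt_of_le hrpos (hrp a b)
      have hqpos : 0 < q b := lt_of_lt_of_le hrpos (hrq a b)
      have hpq : 0 < p a * q b := mul_pos hppos hqpos
      have h1 : Real.log (p a * q b) - Real.log (r a b) = Real.log (p a * q b / r a b) :=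
        (Real.log_div (ne_of_gt hpq) hz).symm
      have h2 : Real.log (p a * q b / r a b) ≤ p a * q b / r a b - 1 :=
        Real.log_le_sub_one_of_pos (div_pos hpq hrpos)
      have h3 : r a b * Real.log (p a * q b / r a b) ≤ r a b * (p a * q b / r a b - 1) :=
        mul_le_mul_of_nonneg_left h2 (hr a b)
      have h4 : r a b * (p a * q b / r a b - 1) = p a * q b - r a b := by
        field_simp
      calc r a b * Real.log (p a * q b) - r a b * Real.log (r a b)
          = r a b * Real.log (p a * q b / r a b) := by rw [← mul_sub, h1]
        _ ≤ p a * q b - r a b := by rw [← h4]; exact h3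
  have sum_key : ∑ a, ∑ b, (r a b * Real.log (p a * q b) - r a b * Real.log (r a b)) ≤ 0 := by
    have hz : ∑ a, ∑ b, (p a * q b - r a b) = 0 := by
      simp_rw [Finset.sum_sub_distrib]
      rw [hsum]
      have hpq2 : ∑ a, ∑ b, p a * q b = (∑ a, p a) * (∑ b, q b) := by
        rw [Finset.sum_mul]
        exact Finset.sum_congr rfl fun a _ => by rw [Finset.mul_sum]
      rw [hpq2, hpsum, hqsum]
      norm_num
    calc ∑ a, ∑ b, (r a b * Real.log (p a * q b) - r a b * Real.log (r a b))
        ≤ ∑ a, ∑ b, (p a * q b - r a b) :=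
          Finset.sum_le_sum fun a _ => Finset.sum_le_sum fun b _ => key a b
      _ = 0 := hz
  -- expand logs of products
  have hlog : ∀ a b, r a b * Real.log (p a * q b)
      = r a b * Real.log (p a) + r a b * Real.log (q b) := by
    intro a b
    by_cases hz : r a b = 0
    · simp [hz]
    · have hrpos : 0 < r a b := lt_of_le_of_ne (hr a b) (Ne.symm hz)
      have hppos : 0 < p a := lt_of_lt_of_le hrpos (hrp a b)
      have hqpos : 0 < q b := lt_of_lt_of_le hrpos (hrq a b)
      rw [Real.log_mul (ne_of_gt hppos) (ne_of_gt hqpos), mul_add]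
  have hmargp : ∑ a, ∑ b, r a b * Real.log (p a) = ∑ a, p a * Real.log (p a) := by
    refine Finset.sum_congr rfl fun a _ => ?_
    rw [← Finset.sum_mul, ← hp]
  have hmargq : ∑ a, ∑ b, r a b * Real.log (q b) = ∑ b, q b * Real.log (q b) := by
    rw [Finset.sum_comm]
    refine Finset.sum_congr rfl fun b _ => ?_
    rw [← Finset.sum_mul, ← hq]
  have expand : ∑ a, ∑ b, (r a b * Real.log (p a * q b) - r a b * Real.log (r a b))
      = (∑ a, p a * Real.log (p a)) + (∑ b, q b * Real.log (q b))
        - ∑ a, ∑ b, r a b * Real.log (r a b) := by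
    simp_rw [hlog]
    rw [← hmargp, ← hmargq]
    simp_rw [Finset.sum_sub_distrib, Finset.sum_add_distrib]
  rw [expand] at sum_key
  simp only [Real.negMulLog, neg_mul, Finset.sum_neg_distrib]
  linarith

lemma contr {VC : Matrix κ κ ℂ} (hVC : VC * VCᴴ = 1) (y y' : κ) :
    (∑ j, star (VC y j) * VC y' j) = if y' = y then (1:ℂ) else 0 := by
  have h := congrFun (congrFun hVC y') y
  rw [Matrix.mul_apply] at h
  simp only [Matrix.conjTranspose_apply] at h
  rw [Matrix.one_apply] at h
  rw [← h]
  exact Finset.sum_congr rfl fun j _ => mul_comm _ _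


lemma trRight_conj (τ : Matrix (ι×κ) (ι×κ) ℂ) (VS : Matrix ι ι ℂ) (VC : Matrix κ κ ℂ)
    (hVC : VC * VCᴴ = 1) :
    trRight (((VS ⊗ₖ VC)ᴴ) * τ * (VS ⊗ₖ VC)) = VSᴴ * trRight τ * VS := by
  funext i i'
  have step1 : trRight (((VS ⊗ₖ VC)ᴴ) * τ * (VS ⊗ₖ VC)) i i'
      = ∑ j, ∑ p : ι × κ, ∑ k : ι × κ,
          (star (VS p.1 i) * τ p k * VS k.1 i') * (star (VC p.2 j) * VC k.2 j) := by
    simp only [trRight, Matrix.mul_apply, Matrix.conjTranspose_apply, Matrix.kroneckerMap_apply,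
      Finset.sum_mul]
    refine Finset.sum_congr rfl fun j _ => ?_
    rw [Finset.sum_comm]
    refine Finset.sum_congr rfl fun p _ => Finset.sum_congr rfl fun k _ => ?_
    simp only [star_mul']
    ring
  rw [step1, Finset.sum_comm]
  have step2 : ∀ p : ι × κ, ∑ j, ∑ k : ι × κ,
      (star (VS p.1 i) * τ p k * VS k.1 i') * (star (VC p.2 j) * VC k.2 j)
      = ∑ k : ι × κ, (star (VS p.1 i) * τ p k * VS k.1 i')
          * ∑ j, (star (VC p.2 j) * VC k.2 j) := by
    intro p
    rw [Finset.sum_comm]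
    exact Finset.sum_congr rfl fun k _ => (Finset.mul_sum _ _ _).symm
  simp_rw [step2, contr hVC, mul_ite, mul_one, mul_zero]
  have step3 : ∀ p : ι × κ, (∑ k : ι × κ, if k.2 = p.2 then star (VS p.1 i) * τ p k * VS k.1 i' else 0)
      = ∑ x : ι, star (VS p.1 i) * τ p (x, p.2) * VS x i' := by
    intro p
    rw [Fintype.sum_prod_type]
    refine Finset.sum_congr rfl fun x _ => ?_
    exact Finset.sum_ite_eq' Finset.univ p.2 (fun y => star (VS p.1 i) * τ p (x, y) * VS x i') |>.trans (by simp)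
  simp_rw [step3]
  -- RHS
  simp only [Matrix.mul_apply, Matrix.conjTranspose_apply, trRight, Finset.sum_mul, Finset.mul_sum]
  conv_lhs => rw [Fintype.sum_prod_type]
  conv_rhs => rw [Finset.sum_comm]
  refine Finset.sum_congr rfl fun x1 _ => ?_
  rw [Finset.sum_comm]


lemma trLeft_conj (τ : Matrix (ι×κ) (ι×κ) ℂ) (VS : Matrix ι ι ℂ) (VC : Matrix κ κ ℂ)
    (hVS : VS * VSᴴ = 1) :
    trLeft (((VS ⊗ₖ VC)ᴴ) * τ * (VS ⊗ₖ VC)) = VCᴴ * trLeft τ * VC := by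
  funext j j'
  have step1 : trLeft (((VS ⊗ₖ VC)ᴴ) * τ * (VS ⊗ₖ VC)) j j'
      = ∑ i, ∑ p : ι × κ, ∑ k : ι × κ,
          (star (VC p.2 j) * τ p k * VC k.2 j') * (star (VS p.1 i) * VS k.1 i) := by
    simp only [trLeft, Matrix.mul_apply, Matrix.conjTranspose_apply, Matrix.kroneckerMap_apply,
      Finset.sum_mul]
    refine Finset.sum_congr rfl fun i _ => ?_
    rw [Finset.sum_comm]
    refine Finset.sum_congr rfl fun p _ => Finset.sum_congr rfl fun k _ => ?_
    simp only [star_mul']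
    ring
  rw [step1, Finset.sum_comm]
  have step2 : ∀ p : ι × κ, ∑ i, ∑ k : ι × κ,
      (star (VC p.2 j) * τ p k * VC k.2 j') * (star (VS p.1 i) * VS k.1 i)
      = ∑ k : ι × κ, (star (VC p.2 j) * τ p k * VC k.2 j')
          * ∑ i, (star (VS p.1 i) * VS k.1 i) := by
    intro p
    rw [Finset.sum_comm]
    exact Finset.sum_congr rfl fun k _ => (Finset.mul_sum _ _ _).symm
  simp_rw [step2, contr hVS, mul_ite, mul_one, mul_zero]
  have step3 : ∀ p : ι × κ, (∑ k : ι × κ, if k.1 = p.1 then star (VC p.2 j) * τ p k * VC k.2 j' else 0)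
      = ∑ y : κ, star (VC p.2 j) * τ p (p.1, y) * VC y j' := by
    intro p
    rw [Fintype.sum_prod_type]
    rw [Finset.sum_comm]
    refine Finset.sum_congr rfl fun y _ => ?_
    exact Finset.sum_ite_eq' Finset.univ p.1 (fun x => star (VC p.2 j) * τ p (x, y) * VC y j') |>.trans (by simp)
  simp_rw [step3]
  -- RHS
  simp only [Matrix.mul_apply, Matrix.conjTranspose_apply, trLeft, Finset.sum_mul, Finset.mul_sum]
  conv_lhs => rw [Fintype.sum_prod_type]
  conv_rhs => rw [Finset.sum_comm]
  rw [Finset.sum_comm]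
  refine Finset.sum_congr rfl fun y1 _ => ?_
  rw [Finset.sum_comm]

lemma trRight_isHermitian {X : Matrix (ι × κ) (ι × κ) ℂ} (hX : X.IsHermitian) :
    (trRight X).IsHermitian := by
  refine Matrix.ext fun i i' => ?_
  simp only [Matrix.conjTranspose_apply, trRight, star_sum]
  exact Finset.sum_congr rfl fun j _ => congrFun (congrFun hX (i, j)) (i', j)

lemma trLeft_isHermitian {X : Matrix (ι × κ) (ι × κ) ℂ} (hX : X.IsHermitian) :
    (trLeft X).IsHermitian := by
  refine Matrix.ext fun j j' => ?_
  simp only [Matrix.conjTranspose_apply, trLeft, star_sum]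
  exact Finset.sum_congr rfl fun i _ => congrFun (congrFun hX (i, j)) (i, j')

lemma trace_trRight (X : Matrix (ι × κ) (ι × κ) ℂ) : (trRight X).trace = X.trace := by
  simp only [Matrix.trace, Matrix.diag, trRight]
  exact Eq.symm (Fintype.sum_prod_type (fun p : ι × κ => X p p))

lemma sum_eigenvalues_real {A : Matrix ι ι ℂ} (hA : A.IsHermitian) (h1 : A.trace = 1) :
    ∑ i, hA.eigenvalues i = 1 := by
  have h := (sum_eigenvalues_eq_trace hA).trans h1
  rw [← Complex.ofReal_sum] at h
  exact_mod_cast h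

lemma subadditivity (τ : Matrix (ι × κ) (ι × κ) ℂ) (hτ : τ.PosSemidef) (htr : τ.trace = 1) :
    vnEntropy τ ≤ vnEntropy (trRight τ) + vnEntropy (trLeft τ) := by
  classical
  have hτH : τ.IsHermitian := hτ.1
  have hS : (trRight τ).IsHermitian := trRight_isHermitian hτH
  have hCm : (trLeft τ).IsHermitian := trLeft_isHermitian hτH
  set VS : Matrix ι ι ℂ := (hS.eigenvectorUnitary : Matrix ι ι ℂ) with hVSdef
  set VC : Matrix κ κ ℂ := (hCm.eigenvectorUnitary : Matrix κ κ ℂ) with hVCdef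
  have hVS : VS * VSᴴ = 1 := by
    simpa [Matrix.star_eq_conjTranspose] using (Matrix.mem_unitaryGroup_iff).mp hS.eigenvectorUnitary.2
  have hVC : VC * VCᴴ = 1 := by
    simpa [Matrix.star_eq_conjTranspose] using (Matrix.mem_unitaryGroup_iff).mp hCm.eigenvectorUnitary.2
  set M : Matrix (ι × κ) (ι × κ) ℂ := ((VS ⊗ₖ VC)ᴴ) * τ * (VS ⊗ₖ VC) with hMdef
  have hMPSD : M.PosSemidef := hτ.conjTranspose_mul_mul_same _
  have hMH : M.IsHermitian := hMPSD.1
  -- entropy of M equals entropy of τ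
  have hVV : (VS ⊗ₖ VC) * (VS ⊗ₖ VC)ᴴ = 1 := by
    rw [kron_conjTranspose, ← Matrix.mul_kronecker_mul, hVS, hVC, Matrix.one_kronecker_one]
  have hchar : M.charpoly = τ.charpoly :=
    my_charpoly_conj _ _ _ (mul_eq_one_comm.mp hVV)
  have hEq : vnEntropy M = vnEntropy τ := by
    rw [vnEntropy_eq hMH, vnEntropy_eq hτH]
    exact sum_eig_eq_of_roots hMH (by rw [hchar, roots_charpoly_hermitian hτH]) _
  -- pinching
  have hpinch : vnEntropy M ≤ ∑ p : ι × κ, Real.negMulLog (M p p).re :=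
    vnEntropy_le_sum_diag hMPSD
  -- marginals
  have hdiagS : trRight M = Matrix.diagonal (RCLike.ofReal ∘ hS.eigenvalues) := by
    rw [hMdef, trRight_conj τ VS VC hVC, ← hS.conjStarAlgAut_star_eigenvectorUnitary,
      Unitary.conjStarAlgAut_apply, Unitary.coe_star, star_star]
    rfl
  have hdiagC : trLeft M = Matrix.diagonal (RCLike.ofReal ∘ hCm.eigenvalues) := by
    rw [hMdef, trLeft_conj τ VS VC hVS, ← hCm.conjStarAlgAut_star_eigenvectorUnitary,
      Unitary.conjStarAlgAut_apply, Unitary.coe_star, star_star]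
    rfl
  set r : ι → κ → ℝ := fun a b => (M (a, b) (a, b)).re with hrdef
  have hrnn : ∀ a b, 0 ≤ r a b := by
    intro a b
    have h : 0 ≤ M (a, b) (a, b) := hMPSD.diag_nonneg
    exact (Complex.le_def.mp h).1
  have hmargS : ∀ a, hS.eigenvalues a = ∑ b, r a b := by
    intro a
    have h1 : trRight M a a = ((hS.eigenvalues a : ℝ) : ℂ) := by
      rw [hdiagS]; simp [Matrix.diagonal_apply_eq]
    have h2 : trRight M a a = ∑ b, M (a, b) (a, b) := rfl
    have := congrArg Complex.re (h2.symm.trans h1)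
    simpa [Complex.re_sum] using this.symm
  have hmargC : ∀ b, hCm.eigenvalues b = ∑ a, r a b := by
    intro b
    have h1 : trLeft M b b = ((hCm.eigenvalues b : ℝ) : ℂ) := by
      rw [hdiagC]; simp [Matrix.diagonal_apply_eq]
    have h2 : trLeft M b b = ∑ a, M (a, b) (a, b) := rfl
    have := congrArg Complex.re (h2.symm.trans h1)
    simpa [Complex.re_sum] using this.symm
  have hpsum : ∑ a, hS.eigenvalues a = 1 := by
    refine sum_eigenvalues_real hS ?_
    rw [trace_trRight, htr]
  have hclass := classical_subadd r (fun a => hS.eigenvalues a) (fun b => hCm.eigenvalues b)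
    hrnn hmargS hmargC hpsum
  have hre : ∑ p : ι × κ, Real.negMulLog (M p p).re = ∑ a, ∑ b, Real.negMulLog (r a b) := by
    rw [Fintype.sum_prod_type]
  calc vnEntropy τ = vnEntropy M := hEq.symm
    _ ≤ ∑ p : ι × κ, Real.negMulLog (M p p).re := hpinch
    _ = ∑ a, ∑ b, Real.negMulLog (r a b) := hre
    _ ≤ (∑ a, Real.negMulLog (hS.eigenvalues a)) + ∑ b, Real.negMulLog (hCm.eigenvalues b) := hclass
    _ = vnEntropy (trRight τ) + vnEntropy (trLeft τ) := by
        rw [vnEntropy_eq hS, vnEntropy_eq hCm]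

end Aux

/-- If `τ = U(ρ_S ⊗ ω_C)U†` and `tr_S τ = ω_C`, then the entropy increase on
`S` equals the mutual information `I(S:C)_τ`; in particular it is
nonnegative. -/
theorem entropy_increase_is_mutual_information {n m : ℕ}
    (U : Matrix (Fin n × Fin m) (Fin n × Fin m) ℂ)
    (hU : U ∈ Matrix.unitaryGroup (Fin n × Fin m) ℂ)
    (ρS : Matrix (Fin n) (Fin n) ℂ) (ωC : Matrix (Fin m) (Fin m) ℂ)
    (hρ : IsDensity ρS) (hω : IsDensity ωC)
    (τ : Matrix (Fin n × Fin m) (Fin n × Fin m) ℂ)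
    (hτ : τ = U * (ρS ⊗ₖ ωC) * Uᴴ)
    (hC : trLeft τ = ωC) :
    vnEntropy (trRight τ) - vnEntropy ρS
      = vnEntropy (trRight τ) + vnEntropy (trLeft τ) - vnEntropy τ ∧
    vnEntropy ρS ≤ vnEntropy (trRight τ) := by
  classical
  have hρH : ρS.IsHermitian := hρ.1.1
  have hωH : ωC.IsHermitian := hω.1.1
  have hUU : U * Uᴴ = 1 := by
    simpa [Matrix.star_eq_conjTranspose] using (Matrix.mem_unitaryGroup_iff).mp hU
  have hτPSD : τ.PosSemidef := by
    rw [hτ]; exact (kron_posSemidef hρ.1 hω.1).mul_mul_conjTranspose_same U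
  have hτH : τ.IsHermitian := hτPSD.1
  have htr : τ.trace = 1 := by
    rw [hτ, Matrix.trace_mul_cycle, mul_eq_one_comm.mp hUU, one_mul,
      Matrix.trace_kronecker, hρ.2, hω.2, mul_one]
  have hτchar : τ.charpoly = (ρS ⊗ₖ ωC).charpoly := by
    rw [hτ]; exact my_charpoly_conj _ _ _ hUU
  have hρsum : ∑ i, hρH.eigenvalues i = 1 := sum_eigenvalues_real hρH hρ.2
  have hωsum : ∑ j, hωH.eigenvalues j = 1 := sum_eigenvalues_real hωH hω.2
  have hsplit : vnEntropy τ = vnEntropy ρS + vnEntropy ωC := by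
    rw [vnEntropy_eq hτH, vnEntropy_eq hρH, vnEntropy_eq hωH]
    have h1 : ∑ i, Real.negMulLog (hτH.eigenvalues i)
        = ∑ p : Fin n × Fin m, Real.negMulLog (hρH.eigenvalues p.1 * hωH.eigenvalues p.2) :=
      sum_eig_eq_of_roots hτH (by rw [hτchar, roots_charpoly_kron hρH hωH]) _
    rw [h1, Fintype.sum_prod_type]
    simp_rw [Real.negMulLog_mul, Finset.sum_add_distrib, ← Finset.sum_mul, ← Finset.mul_sum,
      hωsum, one_mul]
    rw [← Finset.sum_mul, hρsum, one_mul]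
  have hEC : vnEntropy (trLeft τ) = vnEntropy ωC := by rw [hC]
  have hsub := subadditivity τ hτPSD htr
  constructor
  · rw [hsplit, hEC]; ring
  · rw [hsplit, hEC] at hsub; linarith
end

section
/- Rank is monotone under correlated-catalytic unitary transformations: under the assumptions that tr_C[U(ρ_S ⊗ ω_C)U†] = σ_S and tr_S[U(ρ_S ⊗ ω_C)U†] = ω_C for a unitary U, it holds that rank(σ_S) ≥ rank(ρ_S). -/
open Matrix Kronecker
open scoped ComplexOrder Classical

lemma hermitian_spectral_old {k : ℕ} {A : Matrix (Fin k) (Fin k) ℂ} (hA : A.IsHermitian) :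
    A = (hA.eigenvectorUnitary : Matrix (Fin k) (Fin k) ℂ) * diagonal (RCLike.ofReal ∘ hA.eigenvalues)
      * star (hA.eigenvectorUnitary : Matrix (Fin k) (Fin k) ℂ) :=
  hA.spectral_theorem

lemma aux_left {n m : ℕ} (τ : Matrix (Fin n × Fin m) (Fin n × Fin m) ℂ)
    (hτ : τ.PosSemidef) (x : Fin n → ℂ) (hx : trRight τ *ᵥ x = 0) (j : Fin m) :
    τ *ᵥ (fun p => if p.2 = j then x p.1 else 0) = 0 := by
  set v : Fin m → (Fin n × Fin m) → ℂ := fun j p => if p.2 = j then x p.1 else 0 with hv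
  have hsum : ∑ j, star (v j) ⬝ᵥ τ *ᵥ (v j) = star x ⬝ᵥ trRight τ *ᵥ x := by
    simp only [hv, dotProduct, mulVec, trRight, Pi.star_apply]
    simp only [Fintype.sum_prod_type]
    simp only [apply_ite, star_zero, ite_mul, zero_mul, mul_ite, mul_zero,
      Finset.sum_ite_irrel, Finset.sum_const_zero,
      Finset.sum_ite_eq', Finset.mem_univ, if_true]
    rw [Finset.sum_comm]
    refine Finset.sum_congr rfl fun i _ => ?_
    rw [← Finset.mul_sum]
    congr 1
    rw [Finset.sum_comm]
    refine Finset.sum_congr rfl fun i' _ => ?_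
    rw [Finset.sum_mul]
  have hx0 : star x ⬝ᵥ trRight τ *ᵥ x = 0 := by rw [hx, dotProduct_zero]
  have hz : ∀ k ∈ Finset.univ, star (v k) ⬝ᵥ τ *ᵥ (v k) = 0 := by
    refine (Finset.sum_eq_zero_iff_of_nonneg fun k _ => hτ.dotProduct_mulVec_nonneg (v k)).mp ?_
    rw [hsum, hx0]
  exact (hτ.dotProduct_mulVec_zero_iff (v j)).mp (hz j (Finset.mem_univ j))

lemma aux_right {n m : ℕ} (τ : Matrix (Fin n × Fin m) (Fin n × Fin m) ℂ)
    (hτ : τ.PosSemidef) (y : Fin m → ℂ) (hy : trLeft τ *ᵥ y = 0) (i : Fin n) :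
    τ *ᵥ (fun p => if p.1 = i then y p.2 else 0) = 0 := by
  set w : Fin n → (Fin n × Fin m) → ℂ := fun i p => if p.1 = i then y p.2 else 0 with hw
  have hsum : ∑ i, star (w i) ⬝ᵥ τ *ᵥ (w i) = star y ⬝ᵥ trLeft τ *ᵥ y := by
    simp only [hw, dotProduct, mulVec, trLeft, Pi.star_apply]
    simp only [Fintype.sum_prod_type]
    simp only [apply_ite, star_zero, ite_mul, zero_mul, mul_ite, mul_zero,
      Finset.sum_ite_irrel, Finset.sum_const_zero,
      Finset.sum_ite_eq', Finset.mem_univ, if_true]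
    rw [Finset.sum_comm]
    refine Finset.sum_congr rfl fun b _ => ?_
    rw [← Finset.mul_sum]
    congr 1
    rw [Finset.sum_comm]
    refine Finset.sum_congr rfl fun b' _ => ?_
    rw [Finset.sum_mul]
  have hy0 : star y ⬝ᵥ trLeft τ *ᵥ y = 0 := by rw [hy, dotProduct_zero]
  have hz : ∀ k ∈ Finset.univ, star (w k) ⬝ᵥ τ *ᵥ (w k) = 0 := by
    refine (Finset.sum_eq_zero_iff_of_nonneg fun k _ => hτ.dotProduct_mulVec_nonneg (w k)).mp ?_
    rw [hsum, hy0]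
  exact (hτ.dotProduct_mulVec_zero_iff (w i)).mp (hz i (Finset.mem_univ i))

lemma unit_det_left {ι : Type} [Fintype ι] [DecidableEq ι]
    {A B : Matrix ι ι ℂ} (h : A * B = 1) : IsUnit A.det :=
  IsUnit.of_mul_eq_one _ (by rw [← det_mul, h, det_one])

lemma rank_conj_aux {ι : Type} [Fintype ι] [DecidableEq ι]
    (V A V' : Matrix ι ι ℂ) (hV : IsUnit V.det) (hV' : IsUnit V'.det) :
    (V * A * V').rank = A.rank := by
  rw [rank_mul_eq_left_of_isUnit_det V' (V * A) hV',
    rank_mul_eq_right_of_isUnit_det V A hV]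

lemma kron_conjT {a b : ℕ} (A : Matrix (Fin a) (Fin a) ℂ)
    (B : Matrix (Fin b) (Fin b) ℂ) : (A ⊗ₖ B)ᴴ = Aᴴ ⊗ₖ Bᴴ := by
  ext p q
  simp [conjTranspose_apply, kroneckerMap_apply, mul_comm]

lemma psd_kron {a b : ℕ} {A : Matrix (Fin a) (Fin a) ℂ}
    {B : Matrix (Fin b) (Fin b) ℂ} (hA : A.PosSemidef) (hB : B.PosSemidef) :
    (A ⊗ₖ B).PosSemidef := by
  exact hA.kronecker hB

lemma rank_kron {a b : ℕ} {A : Matrix (Fin a) (Fin a) ℂ}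
    {B : Matrix (Fin b) (Fin b) ℂ} (hA : A.IsHermitian) (hB : B.IsHermitian) :
    (A ⊗ₖ B).rank = A.rank * B.rank := by
  set V : Matrix (Fin a) (Fin a) ℂ := (hA.eigenvectorUnitary : Matrix (Fin a) (Fin a) ℂ)
  set W : Matrix (Fin b) (Fin b) ℂ := (hB.eigenvectorUnitary : Matrix (Fin b) (Fin b) ℂ)
  have hV : IsUnit V.det := unit_det_left hA.eigenvectorUnitary.2.2
  have hV' : IsUnit (star V).det := unit_det_left hA.eigenvectorUnitary.2.1
  have hW : IsUnit W.det := unit_det_left hB.eigenvectorUnitary.2.2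
  have hW' : IsUnit (star W).det := unit_det_left hB.eigenvectorUnitary.2.1
  have hVW : IsUnit (V ⊗ₖ W).det := by
    rw [det_kronecker]; exact (hV.pow _).mul (hW.pow _)
  have hVW' : IsUnit ((star V) ⊗ₖ (star W)).det := by
    rw [det_kronecker]; exact (hV'.pow _).mul (hW'.pow _)
  have hAB : A ⊗ₖ B = (V ⊗ₖ W) *
      ((diagonal (RCLike.ofReal ∘ hA.eigenvalues)) ⊗ₖ (diagonal (RCLike.ofReal ∘ hB.eigenvalues)))
      * ((star V) ⊗ₖ (star W)) := by
    rw [← mul_kronecker_mul, ← mul_kronecker_mul, ← hermitian_spectral_old hA, ← hermitian_spectral_old hB]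
  rw [hAB, rank_conj_aux _ _ _ hVW hVW', diagonal_kronecker_diagonal]
  conv_rhs => rw [hermitian_spectral_old hA, hermitian_spectral_old hB]
  rw [rank_conj_aux _ _ _ hV hV', rank_conj_aux _ _ _ hW hW']
  rw [rank_diagonal, rank_diagonal, rank_diagonal, ← Fintype.card_prod]
  refine Fintype.card_congr ((Equiv.subtypeEquivRight ?_).trans (Equiv.subtypeProdEquivProd))
  intro p
  simp [mul_ne_zero_iff]

lemma rank_pos_of_trace_one {k : ℕ} {ω : Matrix (Fin k) (Fin k) ℂ}
    (h : ω.trace = 1) : 0 < ω.rank := by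
  rcases Nat.eq_zero_or_pos ω.rank with h0 | h0
  · exfalso
    have hr : LinearMap.range ω.mulVecLin = ⊥ := Submodule.finrank_eq_zero.mp h0
    have hω0 : ω = 0 := by
      ext i j
      have hmem : ω.mulVecLin (Pi.single j 1) ∈ LinearMap.range ω.mulVecLin :=
        LinearMap.mem_range_self _ _
      rw [hr, Submodule.mem_bot] at hmem
      have := congrFun hmem i
      simpa [mulVecLin_apply, mulVec_single] using this
    rw [hω0] at h
    simp [trace] at h
  · exact h0

/-- Rank is monotone under correlated-catalytic unitary transformations:
`rank σ_S ≥ rank ρ_S`. -/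
theorem rank_correlated_catalytic {n m : ℕ}
    (U : Matrix (Fin n × Fin m) (Fin n × Fin m) ℂ)
    (hU : U ∈ Matrix.unitaryGroup (Fin n × Fin m) ℂ)
    (ρS σS : Matrix (Fin n) (Fin n) ℂ) (ωC : Matrix (Fin m) (Fin m) ℂ)
    (hρ : IsDensity ρS) (hσ : IsDensity σS) (hω : IsDensity ωC)
    (hS : trRight (U * (ρS ⊗ₖ ωC) * Uᴴ) = σS)
    (hC : trLeft (U * (ρS ⊗ₖ ωC) * Uᴴ) = ωC) :
    ρS.rank ≤ σS.rank := by
  set τ := U * (ρS ⊗ₖ ωC) * Uᴴ with hτdef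
  have hUdet : IsUnit U.det := by
    refine unit_det_left (B := Uᴴ) ?_
    rw [← Matrix.star_eq_conjTranspose]
    exact Matrix.mem_unitaryGroup_iff.mp hU
  have hUHdet : IsUnit (Uᴴ).det := by
    refine unit_det_left (B := U) ?_
    rw [← Matrix.star_eq_conjTranspose]
    exact Matrix.mem_unitaryGroup_iff'.mp hU
  have hτpsd : τ.PosSemidef := (psd_kron hρ.1 hω.1).mul_mul_conjTranspose_same U
  -- spectral data for σS
  have hσH : σS.IsHermitian := hσ.1.1
  have hωH : ωC.IsHermitian := hω.1.1
  set V : Matrix (Fin n) (Fin n) ℂ := (hσH.eigenvectorUnitary : Matrix (Fin n) (Fin n) ℂ) with hVdef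
  set W : Matrix (Fin m) (Fin m) ℂ := (hωH.eigenvectorUnitary : Matrix (Fin m) (Fin m) ℂ) with hWdef
  have hVdet : IsUnit V.det := unit_det_left hσH.eigenvectorUnitary.2.2
  have hVdet' : IsUnit (star V).det := unit_det_left hσH.eigenvectorUnitary.2.1
  have hWdet : IsUnit W.det := unit_det_left hωH.eigenvectorUnitary.2.2
  have hWdet' : IsUnit (star W).det := unit_det_left hωH.eigenvectorUnitary.2.1
  have hsv : star V * V = 1 := hσH.eigenvectorUnitary.2.1
  have hsw : star W * W = 1 := hωH.eigenvectorUnitary.2.1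
  set indσ : Fin n → ℂ := fun i => if hσH.eigenvalues i = 0 then 0 else 1 with hindσ
  set indω : Fin m → ℂ := fun j => if hωH.eigenvalues j = 0 then 0 else 1 with hindω
  set P : Matrix (Fin n) (Fin n) ℂ := V * diagonal indσ * star V with hPdef
  set Q : Matrix (Fin m) (Fin m) ℂ := W * diagonal indω * star W with hQdef
  have hsv' : ∀ X : Matrix (Fin n) (Fin n) ℂ, star V * (V * X) = X := fun X => by
    rw [← mul_assoc, hsv, one_mul]
  have hsw' : ∀ X : Matrix (Fin m) (Fin m) ℂ, star W * (W * X) = X := fun X => by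
    rw [← mul_assoc, hsw, one_mul]
  have hddσ : diagonal (RCLike.ofReal ∘ hσH.eigenvalues) * diagonal indσ
      = diagonal (RCLike.ofReal ∘ hσH.eigenvalues) := by
    rw [diagonal_mul_diagonal]
    refine congrArg diagonal (funext fun i => ?_)
    by_cases h : hσH.eigenvalues i = 0 <;> simp [hindσ, h]
  have hddω : diagonal (RCLike.ofReal ∘ hωH.eigenvalues) * diagonal indω
      = diagonal (RCLike.ofReal ∘ hωH.eigenvalues) := by
    rw [diagonal_mul_diagonal]
    refine congrArg diagonal (funext fun j => ?_)
    by_cases h : hωH.eigenvalues j = 0 <;> simp [hindω, h]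
  have hσP : σS * P = σS := by
    conv_lhs => rw [hermitian_spectral_old hσH]
    conv_rhs => rw [hermitian_spectral_old hσH]
    rw [hPdef]
    simp only [mul_assoc, hsv']
    congr 1
    show diagonal (RCLike.ofReal ∘ hσH.eigenvalues) * (star V * (V * (diagonal indσ * star V))) =
      diagonal (RCLike.ofReal ∘ hσH.eigenvalues) * star V
    rw [hsv', ← mul_assoc, hddσ]
  have hωQ : ωC * Q = ωC := by
    conv_lhs => rw [hermitian_spectral_old hωH]
    conv_rhs => rw [hermitian_spectral_old hωH]
    rw [hQdef]
    simp only [mul_assoc, hsw']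
    congr 1
    show diagonal (RCLike.ofReal ∘ hωH.eigenvalues) * (star W * (W * (diagonal indω * star W))) =
      diagonal (RCLike.ofReal ∘ hωH.eigenvalues) * star W
    rw [hsw', ← mul_assoc, hddω]
  -- P and Q are Hermitian
  have hdsσ : (diagonal indσ)ᴴ = diagonal indσ := by
    rw [diagonal_conjTranspose]
    refine congrArg diagonal (funext fun i => ?_)
    by_cases h : hσH.eigenvalues i = 0 <;> simp [hindσ, h]
  have hdsω : (diagonal indω)ᴴ = diagonal indω := by
    rw [diagonal_conjTranspose]
    refine congrArg diagonal (funext fun j => ?_)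
    by_cases h : hωH.eigenvalues j = 0 <;> simp [hindω, h]
  have hPH : P.IsHermitian := by
    show Pᴴ = P
    rw [hPdef]
    simp only [conjTranspose_mul, hdsσ, Matrix.star_eq_conjTranspose,
      conjTranspose_conjTranspose, mul_assoc]
  have hQH : Q.IsHermitian := by
    show Qᴴ = Q
    rw [hQdef]
    simp only [conjTranspose_mul, hdsω, Matrix.star_eq_conjTranspose,
      conjTranspose_conjTranspose, mul_assoc]
  -- ranks of projections
  have hrankP : P.rank = σS.rank := by
    conv_rhs => rw [hermitian_spectral_old hσH]
    rw [hPdef, rank_conj_aux V (diagonal indσ) (star V) hVdet hVdet',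
      rank_conj_aux V (diagonal (RCLike.ofReal ∘ hσH.eigenvalues)) (star V) hVdet hVdet',
      rank_diagonal, rank_diagonal]
    refine Fintype.card_congr (Equiv.subtypeEquivRight fun i => ?_)
    by_cases h : hσH.eigenvalues i = 0 <;> simp [hindσ, h]
  have hrankQ : Q.rank = ωC.rank := by
    conv_rhs => rw [hermitian_spectral_old hωH]
    rw [hQdef, rank_conj_aux W (diagonal indω) (star W) hWdet hWdet',
      rank_conj_aux W (diagonal (RCLike.ofReal ∘ hωH.eigenvalues)) (star W) hWdet hWdet',
      rank_diagonal, rank_diagonal]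
    refine Fintype.card_congr (Equiv.subtypeEquivRight fun j => ?_)
    by_cases h : hωH.eigenvalues j = 0 <;> simp [hindω, h]
  -- kernel facts
  have h1 : σS * (1 - P) = 0 := by rw [Matrix.mul_sub, Matrix.mul_one, hσP, sub_self]
  have h2 : ωC * (1 - Q) = 0 := by rw [Matrix.mul_sub, Matrix.mul_one, hωQ, sub_self]
  have hk1 : τ * ((1 - P) ⊗ₖ (1 : Matrix (Fin m) (Fin m) ℂ)) = 0 := by
    ext p q
    obtain ⟨i, j⟩ := q
    have hx : trRight τ *ᵥ (fun r => (1 - P) r i) = 0 := by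
      rw [hS]
      funext r
      have h2' := congrFun (congrFun h1 r) i
      simpa [mulVec, dotProduct, mul_apply] using h2'
    have h0 := congrFun (aux_left τ hτpsd (fun r => (1 - P) r i) hx j) p
    simp only [mulVec, dotProduct, Pi.zero_apply] at h0
    rw [Matrix.zero_apply, Matrix.mul_apply, ← h0]
    refine Finset.sum_congr rfl fun r _ => ?_
    by_cases h : r.2 = j <;> simp [kroneckerMap_apply, one_apply, h]
  have hk2 : τ * (P ⊗ₖ (1 - Q)) = 0 := by
    ext p q
    obtain ⟨i, j⟩ := q
    have hy : trLeft τ *ᵥ (fun s => (1 - Q) s j) = 0 := by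
      rw [hC]
      funext s
      have h2' := congrFun (congrFun h2 s) j
      simpa [mulVec, dotProduct, mul_apply] using h2'
    rw [Matrix.zero_apply, Matrix.mul_apply, Fintype.sum_prod_type]
    refine Finset.sum_eq_zero fun i' _ => ?_
    have h3 := congrFun (aux_right τ hτpsd (fun s => (1 - Q) s j) hy i') p
    simp only [mulVec, dotProduct, Pi.zero_apply, Fintype.sum_prod_type, mul_ite, mul_zero,
      Finset.sum_ite_irrel, Finset.sum_const_zero, Finset.sum_ite_eq', Finset.mem_univ,
      if_true] at h3
    calc ∑ j', τ p (i', j') * (P ⊗ₖ (1 - Q)) (i', j') (i, j)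
        = P i' i * ∑ j', τ p (i', j') * (1 - Q) j' j := by
          rw [Finset.mul_sum]
          refine Finset.sum_congr rfl fun j' _ => ?_
          simp [kroneckerMap_apply]
          ring
      _ = 0 := by rw [h3, mul_zero]
  have e1 : (1 - P) ⊗ₖ (1 : Matrix (Fin m) (Fin m) ℂ) + P ⊗ₖ (1 - Q)
      = 1 - P ⊗ₖ Q := by
    ext ⟨a, b⟩ ⟨c, e⟩
    simp only [Matrix.add_apply, Matrix.sub_apply, kroneckerMap_apply, Matrix.one_apply,
      Prod.mk.injEq]
    by_cases h1' : a = c <;> by_cases h2' : b = e <;> simp [h1', h2'] <;> ring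
  have hfix : τ * (P ⊗ₖ Q) = τ := by
    have h4 : τ * ((1 - P) ⊗ₖ (1 : Matrix (Fin m) (Fin m) ℂ) + P ⊗ₖ (1 - Q)) = 0 := by
      rw [Matrix.mul_add, hk1, hk2, add_zero]
    rw [e1, Matrix.mul_sub, Matrix.mul_one] at h4
    exact (sub_eq_zero.mp h4).symm
  -- rank chain
  have hτrank : τ.rank = ρS.rank * ωC.rank := by
    rw [hτdef, rank_conj_aux U (ρS ⊗ₖ ωC) Uᴴ hUdet hUHdet, rank_kron hρ.1.1 hω.1.1]
  have h6 : τ.rank ≤ (P ⊗ₖ Q).rank := by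
    calc τ.rank = (τ * (P ⊗ₖ Q)).rank := by rw [hfix]
      _ ≤ (P ⊗ₖ Q).rank := rank_mul_le_right _ _
  have h7 : (P ⊗ₖ Q).rank = σS.rank * ωC.rank := by
    rw [rank_kron hPH hQH, hrankP, hrankQ]
  have h8 : ρS.rank * ωC.rank ≤ σS.rank * ωC.rank := by
    rw [← hτrank, ← h7]; exact h6
  exact Nat.le_of_mul_le_mul_right h8 (rank_pos_of_trace_one hω.2)
end
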